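/- Let A be an open subset of ℝⁿ and F : A × ℝ → ℝ be continuously differentiable. Suppose there exists a function g : A → ℝ such that ∂F/∂y(x,y) > g(x) > 0 for all (x,y) ∈ A × ℝ. Then there exists a continuously differentiable function G : A → ℝ such that F(x, G(x)) = 0 for all x ∈ A. -/

import Mathlib

/-- Global implicit function theorem: if `F : A × ℝ → ℝ` is `C¹` on `A × ℝ` (`A ⊆ ℝⁿ` open)
and its partial derivative in the second variable satisfies `∂F/∂y (x,y) > g x > 0` for all
`(x,y) ∈ A × ℝ`, then there is a `C¹` function `G : A → ℝ` with `F (x, G x) = 0` on `A`. -/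
theorem global_implicit_function_theorem
    (n : ℕ) (A : Set (Fin n → ℝ)) (hA : IsOpen A)
    (F : (Fin n → ℝ) × ℝ → ℝ) (hF : ContDiffOn ℝ 1 F (A ×ˢ (Set.univ : Set ℝ)))
    (F' : (Fin n → ℝ) → ℝ → ℝ)
    (hF' : ∀ x ∈ A, ∀ y : ℝ, HasDerivAt (fun t => F (x, t)) (F' x y) y)
    (g : (Fin n → ℝ) → ℝ)
    (hg : ∀ x ∈ A, ∀ y : ℝ, F' x y > g x ∧ g x > 0) :
    ∃ G : (Fin n → ℝ) → ℝ, ContDiffOn ℝ 1 G A ∧ ∀ x ∈ A, F (x, G x) = 0 := by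
  classical
  have hAopen : IsOpen (A ×ˢ (Set.univ : Set ℝ)) := hA.prod isOpen_univ
  -- strict monotonicity in the second variable
  have hmono : ∀ x ∈ A, StrictMono fun y => F (x, y) := by
    intro x hx
    apply strictMono_of_deriv_pos
    intro y
    rw [(hF' x hx y).deriv]
    exact (hg x hx y).2.trans (hg x hx y).1
  -- existence of a root for each x ∈ A
  have hex : ∀ x ∈ A, ∃ y, F (x, y) = 0 := by
    intro x hx
    set f : ℝ → ℝ := fun y => F (x, y) with hfdef
    have hdiff : Differentiable ℝ f := fun y => (hF' x hx y).differentiableAt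
    have hge : ∀ y : ℝ, g x ≤ deriv f y := by
      intro y
      rw [(hF' x hx y).deriv]
      exact (hg x hx y).1.le
    have hgx : 0 < g x := (hg x hx 0).2
    set b : ℝ := (|f 0| + 1) / g x with hb
    have hb0 : 0 ≤ b := div_nonneg (by positivity) hgx.le
    have hgb : g x * b = |f 0| + 1 := by
      rw [hb]; field_simp
    have h1 : g x * (b - 0) ≤ f b - f 0 :=
      mul_sub_le_image_sub_of_le_deriv hdiff hge hb0
    have h2 : g x * (0 - (-b)) ≤ f 0 - f (-b) :=
      mul_sub_le_image_sub_of_le_deriv hdiff hge (by linarith)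
    have hfb : 0 ≤ f b := by
      nlinarith [neg_abs_le (f 0), le_abs_self (f 0)]
    have hfnb : f (-b) ≤ 0 := by
      nlinarith [neg_abs_le (f 0), le_abs_self (f 0)]
    obtain ⟨y, _, hy⟩ := intermediate_value_Icc (by linarith : -b ≤ b)
      hdiff.continuous.continuousOn ⟨hfnb, hfb⟩
    exact ⟨y, hy⟩
  choose! G hG using hex
  have huniq : ∀ x ∈ A, ∀ y, F (x, y) = 0 → y = G x := by
    intro x hx y hy
    exact (hmono x hx).injective (hy.trans (hG x hx).symm)
  refine ⟨G, ?_, hG⟩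
  intro x₀ hx₀
  suffices h : ContDiffAt ℝ 1 G x₀ from h.contDiffWithinAt
  -- Set up the inverse function theorem for Φ (x, y) = (x, F (x, y))
  have hy₀ : F (x₀, G x₀) = 0 := hG x₀ hx₀
  set p₀ : (Fin n → ℝ) × ℝ := (x₀, G x₀) with hp₀
  have hp₀mem : p₀ ∈ A ×ˢ (Set.univ : Set ℝ) := ⟨hx₀, trivial⟩
  have hFat : ContDiffAt ℝ 1 F p₀ := hF.contDiffAt (hAopen.mem_nhds hp₀mem)
  have hFdiff : DifferentiableAt ℝ F p₀ := hFat.differentiableAt one_ne_zero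
  set L : ((Fin n → ℝ) × ℝ) →L[ℝ] ℝ := fderiv ℝ F p₀ with hL
  have hFd : HasFDerivAt F L p₀ := hFdiff.hasFDerivAt
  have hcurve : HasDerivAt (fun t : ℝ => ((x₀, t) : (Fin n → ℝ) × ℝ))
      (((0 : Fin n → ℝ), (1 : ℝ)) : (Fin n → ℝ) × ℝ) (G x₀) :=
    (hasDerivAt_const (G x₀) x₀).prodMk (hasDerivAt_id (G x₀))
  have hcomp : HasDerivAt (fun t => F (x₀, t)) (L ((0 : Fin n → ℝ), (1 : ℝ))) (G x₀) :=
    hFd.comp_hasDerivAt (G x₀) hcurve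
  set c : ℝ := F' x₀ (G x₀) with hcdef
  have hc : L ((0 : Fin n → ℝ), (1 : ℝ)) = c := hcomp.unique (hF' x₀ hx₀ (G x₀))
  have hcpos : 0 < c := (hg x₀ hx₀ (G x₀)).2.trans (hg x₀ hx₀ (G x₀)).1
  have hc0 : c ≠ 0 := ne_of_gt hcpos
  set L₁ : (Fin n → ℝ) →L[ℝ] ℝ := L.comp (ContinuousLinearMap.inl ℝ (Fin n → ℝ) ℝ) with hL₁
  have hLsplit : ∀ (u : Fin n → ℝ) (v : ℝ), L (u, v) = L₁ u + v * c := by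
    intro u v
    have huv : ((u, v) : (Fin n → ℝ) × ℝ)
        = ((u, 0) : (Fin n → ℝ) × ℝ) + v • (((0 : Fin n → ℝ), (1 : ℝ))) := by
      simp
    rw [huv, map_add, map_smul, hc]
    simp [hL₁, smul_eq_mul]
  set T : ((Fin n → ℝ) × ℝ) →L[ℝ] ((Fin n → ℝ) × ℝ) :=
    (ContinuousLinearMap.fst ℝ (Fin n → ℝ) ℝ).prod L with hT
  set S : ((Fin n → ℝ) × ℝ) →L[ℝ] ((Fin n → ℝ) × ℝ) :=
    (ContinuousLinearMap.fst ℝ (Fin n → ℝ) ℝ).prod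
      (c⁻¹ • (ContinuousLinearMap.snd ℝ (Fin n → ℝ) ℝ -
        L₁.comp (ContinuousLinearMap.fst ℝ (Fin n → ℝ) ℝ))) with hS
  have h₁ : Function.LeftInverse S T := by
    rintro ⟨u, v⟩
    simp only [hT, hS, ContinuousLinearMap.prod_apply, ContinuousLinearMap.coe_fst',
      ContinuousLinearMap.smul_apply, ContinuousLinearMap.coe_sub',
      ContinuousLinearMap.coe_comp', Function.comp_apply, Pi.sub_apply,
      ContinuousLinearMap.coe_snd']
    refine Prod.ext rfl ?_
    rw [hLsplit u v]
    rw [smul_eq_mul]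
    field_simp
    ring
  have h₂ : Function.RightInverse S T := by
    rintro ⟨u, w⟩
    simp only [hT, hS, ContinuousLinearMap.prod_apply, ContinuousLinearMap.coe_fst',
      ContinuousLinearMap.smul_apply, ContinuousLinearMap.coe_sub',
      ContinuousLinearMap.coe_comp', Function.comp_apply, Pi.sub_apply,
      ContinuousLinearMap.coe_snd']
    refine Prod.ext rfl ?_
    rw [hLsplit u (c⁻¹ • (w - L₁ u))]
    rw [smul_eq_mul]
    field_simp
    ring
  set Teq : ((Fin n → ℝ) × ℝ) ≃L[ℝ] ((Fin n → ℝ) × ℝ) :=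
    ContinuousLinearEquiv.equivOfInverse T S h₁ h₂ with hTeq
  set Φ : ((Fin n → ℝ) × ℝ) → ((Fin n → ℝ) × ℝ) := fun p => (p.1, F p) with hΦ
  have hΦc : ContDiffAt ℝ 1 Φ p₀ := contDiffAt_fst.prodMk hFat
  have hΦd : HasFDerivAt Φ (Teq : ((Fin n → ℝ) × ℝ) →L[ℝ] ((Fin n → ℝ) × ℝ)) p₀ := by
    have hTc : (Teq : ((Fin n → ℝ) × ℝ) →L[ℝ] ((Fin n → ℝ) × ℝ)) = T := rfl
    rw [hTc]
    exact hasFDerivAt_fst.prodMk hFd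
  set Ψ : ((Fin n → ℝ) × ℝ) → ((Fin n → ℝ) × ℝ) := hΦc.localInverse hΦd one_ne_zero with hΨ
  have hΨc : ContDiffAt ℝ 1 Ψ (Φ p₀) := hΦc.to_localInverse hΦd one_ne_zero
  have hstrict : HasStrictFDerivAt Φ
      (Teq : ((Fin n → ℝ) × ℝ) →L[ℝ] ((Fin n → ℝ) × ℝ)) p₀ :=
    hΦc.hasStrictFDerivAt' hΦd one_ne_zero
  have hri : ∀ᶠ q in nhds (Φ p₀), Φ (Ψ q) = q := hstrict.eventually_right_inverse
  have hΦp₀ : Φ p₀ = (x₀, (0 : ℝ)) := by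
    simp only [hΦ]
    exact Prod.ext rfl hy₀
  have hev1 : ∀ᶠ x in nhds x₀, Φ (Ψ (x, (0 : ℝ))) = (x, (0 : ℝ)) := by
    have htend : Filter.Tendsto (fun x : Fin n → ℝ => ((x, (0 : ℝ)) : (Fin n → ℝ) × ℝ))
        (nhds x₀) (nhds (Φ p₀)) := by
      rw [hΦp₀]
      exact (continuous_id.prodMk continuous_const).continuousAt
    exact htend.eventually hri
  have heq : (fun x => (Ψ (x, (0 : ℝ))).2) =ᶠ[nhds x₀] G := by
    filter_upwards [hev1, hA.eventually_mem hx₀] with x h1 hx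
    have h1a : (Ψ (x, (0 : ℝ))).1 = x := congrArg Prod.fst h1
    have h1b : F (Ψ (x, (0 : ℝ))) = 0 := congrArg Prod.snd h1
    have hxy : ((x, (Ψ (x, (0 : ℝ))).2) : (Fin n → ℝ) × ℝ) = Ψ (x, (0 : ℝ)) :=
      Prod.ext h1a.symm rfl
    have : F (x, (Ψ (x, (0 : ℝ))).2) = 0 := by rw [hxy]; exact h1b
    exact huniq x hx _ this
  have hΨG : ContDiffAt ℝ 1 (fun x : Fin n → ℝ => (Ψ (x, (0 : ℝ))).2) x₀ := by
    have h1 : ContDiffAt ℝ 1 Ψ ((x₀, (0 : ℝ)) : (Fin n → ℝ) × ℝ) := hΦp₀ ▸ hΨc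
    have h2 : ContDiffAt ℝ 1 (fun x : Fin n → ℝ => ((x, (0 : ℝ)) : (Fin n → ℝ) × ℝ)) x₀ :=
      contDiffAt_id.prodMk contDiffAt_const
    exact contDiffAt_snd.comp x₀ (h1.comp x₀ h2)
  exact hΨG.congr_of_eventuallyEq heq.symm
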